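/- (Kleene's theorem, automaton-to-expression direction) Let α be a finite alphabet and σ a finite type. For every nondeterministic finite automaton M over α with state type σ, there exists a regular expression e over α such that ⟦e⟧ = M.accepts. -/

import Mathlib

open Set Computability

namespace NfaToRegexpAux

variable {α : Type*} {σ : Type*}

/-- A walk in the NFA `M` from `p` to `r` reading the word `x`, whose intermediate
states (all states visited strictly between the endpoints) lie in `S`. -/
inductive Walk (M : NFA α σ) (S : Set σ) : σ → σ → List α → Prop
  | nil (p : σ) : Walk M S p p []
  | cons {p q r : σ} {a : α} {x : List α} (h1 : q ∈ M.step p a)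
      (h2 : x = [] ∨ q ∈ S) (h3 : Walk M S q r x) : Walk M S p r (a :: x)

/-- The language of walks from `p` to `r` with intermediate states in `S`. -/
def Lang (M : NFA α σ) (S : Set σ) (p r : σ) : Language α := {x | Walk M S p r x}

lemma walk_nil_iff {M : NFA α σ} {S : Set σ} {p r : σ} : Walk M S p r [] ↔ p = r := by
  constructor
  · intro h; cases h; rfl
  · rintro rfl; exact Walk.nil p

lemma walk_mono {M : NFA α σ} {S T : Set σ} (hST : S ⊆ T) {p r : σ} {x : List α}
    (h : Walk M S p r x) : Walk M T p r x := by
  induction h with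
  | nil p => exact Walk.nil p
  | cons h1 h2 _ ih => exact Walk.cons h1 (h2.imp id fun h => hST h) ih

lemma walk_append {M : NFA α σ} {S : Set σ} {p q : σ} {y : List α}
    (hy : Walk M S p q y) :
    ∀ {r : σ} {z : List α}, Walk M S q r z → Walk M (insert q S) p r (y ++ z) := by
  induction hy with
  | nil p' => exact fun hz => walk_mono (Set.subset_insert _ _) hz
  | cons h1 h2 h3 ih =>
    intro r z hz
    refine Walk.cons h1 ?_ (ih hz)
    rcases h2 with rfl | h2
    · cases walk_nil_iff.mp h3
      exact Or.inr (Set.mem_insert _ _)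
    · exact Or.inr (Or.inr h2)

lemma walk_star {M : NFA α σ} {S : Set σ} {q : σ} {m : List α}
    (hm : m ∈ (Lang M S q q)∗) : Walk M (insert q S) q q m := by
  rw [Language.mem_kstar] at hm
  obtain ⟨L, rfl, hL⟩ := hm
  induction L with
  | nil => exact Walk.nil q
  | cons y L ih =>
    have h1 : Walk M (insert q S) q q y :=
      walk_mono (Set.subset_insert q S) (hL y (by simp))
    have h2 : Walk M (insert q S) q q L.flatten := ih fun z hz => hL z (by simp [hz])
    have := walk_append h1 h2
    rwa [Set.insert_idem] at this

lemma walk_insert {M : NFA α σ} {S : Set σ} {q p r : σ} {x : List α}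
    (h : Walk M (insert q S) p r x) :
    Walk M S p r x ∨ x ∈ Lang M S p q * (Lang M S q q)∗ * Lang M S q r := by
  induction h with
  | nil p => exact Or.inl (Walk.nil p)
  | cons h1 h2 _ ih =>
    rename_i p t r a x _
    rcases ih with w | hx
    · -- tail is a walk avoiding q
      rcases h2 with rfl | ht
      · exact Or.inl (Walk.cons h1 (Or.inl rfl) w)
      · rcases ht with rfl | ht
        · -- t = q : split a :: x = ([a] ++ []) ++ x
          right
          refine ⟨[a] ++ [], ?_, x, w, by simp⟩
          exact Language.append_mem_mul
            (Walk.cons h1 (Or.inl rfl) (Walk.nil t)) (Language.nil_mem_kstar _)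
        · exact Or.inl (Walk.cons h1 (Or.inr ht) w)
    · -- tail decomposes through q
      obtain ⟨u, hu, z, hz, rfl⟩ := hx
      obtain ⟨y, hy, m, hm, rfl⟩ := hu
      by_cases htq : t = q
      · subst htq
        right
        have hym : y ++ m ∈ (Lang M S t t)∗ := by
          replace hm := Language.mem_kstar.mp hm
          refine Language.mem_kstar.mpr ?_
          obtain ⟨L, rfl, hL⟩ := hm
          refine ⟨y :: L, by simp, ?_⟩
          intro z hz
          rcases List.mem_cons.mp hz with rfl | hz
          · exact hy
          · exact hL _ hz
        refine ⟨[a] ++ (y ++ m), Language.append_mem_mul ?_ hym, z, hz, by simp⟩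
        exact Walk.cons h1 (Or.inl rfl) (Walk.nil t)
      · have ht : t ∈ S := by
          rcases h2 with hnil | ht
        -- if the whole tail is empty then y = [] forcing t = q, contradiction
          · exfalso
            rcases List.append_eq_nil_iff.mp hnil with ⟨hym, -⟩
            rcases List.append_eq_nil_iff.mp hym with ⟨rfl, -⟩
            exact htq (walk_nil_iff.mp hy)
          · rcases ht with rfl | ht
            · exact absurd rfl htq
            · exact ht
        right
        refine ⟨(a :: y) ++ m, Language.append_mem_mul ?_ hm, z, hz, by simp⟩
        exact Walk.cons h1 (Or.inr ht) hy

lemma lang_insert (M : NFA α σ) (S : Set σ) (q p r : σ) :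
    Lang M (insert q S) p r =
      Lang M S p r + Lang M S p q * (Lang M S q q)∗ * Lang M S q r := by
  ext x
  constructor
  · intro h
    rcases walk_insert h with h | h
    · exact Or.inl h
    · exact Or.inr h
  · rintro (h | h)
    · exact walk_mono (Set.subset_insert q S) h
    · obtain ⟨u, hu, z, hz, rfl⟩ := h
      obtain ⟨y, hy, m, hm, rfl⟩ := hu
      have hmz : Walk M (insert q S) q r (m ++ z) := by
        have := walk_append (walk_star hm) (walk_mono (Set.subset_insert q S) hz)
        rwa [Set.insert_idem] at this
      have := walk_append (walk_mono (Set.subset_insert q S) hy) hmz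
      rw [Set.insert_idem] at this
      show Walk M (insert q S) p r _
      simpa using this

/-- Languages denoted by some regular expression. -/
def IsReg (L : Language α) : Prop := ∃ e : RegularExpression α, e.matches' = L

lemma IsReg.zero : IsReg (0 : Language α) := ⟨0, rfl⟩

lemma IsReg.one : IsReg (1 : Language α) := ⟨1, rfl⟩

lemma IsReg.add {L₁ L₂ : Language α} (h₁ : IsReg L₁) (h₂ : IsReg L₂) : IsReg (L₁ + L₂) := by
  obtain ⟨e₁, rfl⟩ := h₁; obtain ⟨e₂, rfl⟩ := h₂
  exact ⟨e₁ + e₂, RegularExpression.matches'_add e₁ e₂⟩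

lemma IsReg.mul {L₁ L₂ : Language α} (h₁ : IsReg L₁) (h₂ : IsReg L₂) : IsReg (L₁ * L₂) := by
  obtain ⟨e₁, rfl⟩ := h₁; obtain ⟨e₂, rfl⟩ := h₂
  exact ⟨e₁ * e₂, RegularExpression.matches'_mul e₁ e₂⟩

lemma IsReg.kstar {L : Language α} (h : IsReg L) : IsReg (L∗) := by
  obtain ⟨e, rfl⟩ := h
  exact ⟨e.star, RegularExpression.matches'_star e⟩

open Classical in
lemma isReg_charList (P : α → Prop) (l : List α) :
    IsReg {x : List α | ∃ a ∈ l, x = [a] ∧ P a} := by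
  induction l with
  | nil =>
    refine ⟨0, ?_⟩
    ext x
    rw [RegularExpression.matches'_zero]
    exact iff_of_false (Language.notMem_zero x) fun ⟨a, ha, _⟩ => List.not_mem_nil ha
  | cons b l ih =>
    obtain ⟨e, he⟩ := ih
    classical
    refine ⟨(if P b then RegularExpression.char b else 0) + e, ?_⟩
    ext x
    by_cases hb : P b
    · rw [if_pos hb]
      simp only [RegularExpression.matches'_add, Language.mem_add,
        RegularExpression.matches'_char, he, Set.mem_setOf_eq, List.mem_cons,
        Set.mem_singleton_iff]
      constructor
      · rintro (rfl | ⟨a, ha, rfl, hPa⟩)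
        · exact ⟨b, Or.inl rfl, rfl, hb⟩
        · exact ⟨a, Or.inr ha, rfl, hPa⟩
      · rintro ⟨a, (rfl | ha), rfl, hPa⟩
        · exact Or.inl rfl
        · exact Or.inr ⟨a, ha, rfl, hPa⟩
    · rw [if_neg hb]
      simp only [RegularExpression.matches'_add, Language.mem_add,
        RegularExpression.matches'_zero, he, Set.mem_setOf_eq, List.mem_cons]
      constructor
      · rintro (h | ⟨a, ha, rfl, hPa⟩)
        · exact absurd h (Language.notMem_zero x)
        · exact ⟨a, Or.inr ha, rfl, hPa⟩
      · rintro ⟨a, (rfl | ha), rfl, hPa⟩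
        · exact absurd hPa hb
        · exact Or.inr ⟨a, ha, rfl, hPa⟩

lemma isReg_char (P : α → Prop) [Fintype α] :
    IsReg {x : List α | ∃ a, x = [a] ∧ P a} := by
  have : {x : List α | ∃ a, x = [a] ∧ P a}
      = {x : List α | ∃ a ∈ (Finset.univ : Finset α).toList, x = [a] ∧ P a} := by
    ext x; simp
  rw [this]; exact isReg_charList P _

lemma isReg_lang_empty (M : NFA α σ) [Fintype α] (p r : σ) : IsReg (Lang M ∅ p r) := by
  classical
  obtain ⟨e, he⟩ := isReg_char (fun a => r ∈ M.step p a)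
  refine ⟨(if p = r then 1 else 0) + e, ?_⟩
  ext x
  simp only [RegularExpression.matches'_add, Language.mem_add, he, Set.mem_setOf_eq]
  constructor
  · rintro (h | h)
    · by_cases hpr : p = r
      · subst hpr
        rw [if_pos rfl, RegularExpression.matches'_epsilon] at h
        replace h := (Language.mem_one x).mp h
        subst h
        exact Walk.nil p
      · rw [if_neg hpr, RegularExpression.matches'_zero] at h
        exact absurd h (Language.notMem_zero x)
    · obtain ⟨a, rfl, ha⟩ := h
      exact Walk.cons ha (Or.inl rfl) (Walk.nil r)
  · intro h
    cases h with
    | nil =>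
      left
      simp [RegularExpression.matches'_epsilon, Language.mem_one]
      exact (Language.mem_one _).mpr rfl
    | cons h1 h2 h3 =>
      rcases h2 with rfl | h2
      · cases walk_nil_iff.mp h3
        right
        exact ⟨_, rfl, h1⟩
      · exact absurd h2 (Set.notMem_empty _)

lemma isReg_lang (M : NFA α σ) [Fintype α] :
    ∀ (l : List σ) (p r : σ), IsReg (Lang M {s | s ∈ l} p r) := by
  intro l
  induction l with
  | nil =>
    intro p r
    have h0 : {s : σ | s ∈ ([] : List σ)} = (∅ : Set σ) := by ext s; simp
    rw [h0]
    exact isReg_lang_empty M p r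
  | cons q l ih =>
    intro p r
    have h0 : {s : σ | s ∈ q :: l} = insert q {s : σ | s ∈ l} := by ext s; simp
    rw [h0, lang_insert]
    exact IsReg.add (ih p r) ((IsReg.mul (IsReg.mul (ih p q) (IsReg.kstar (ih q q))) (ih q r)))

lemma mem_evalFrom_iff_walk (M : NFA α σ) :
    ∀ (x : List α) (Q : Set σ) (r : σ),
      r ∈ M.evalFrom Q x ↔ ∃ p ∈ Q, Walk M Set.univ p r x := by
  intro x
  induction x with
  | nil =>
    intro Q r
    simp only [NFA.evalFrom_nil]
    constructor
    · intro h; exact ⟨r, h, Walk.nil r⟩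
    · rintro ⟨p, hp, hw⟩; cases walk_nil_iff.mp hw; exact hp
  | cons a x ih =>
    intro Q r
    have : M.evalFrom Q (a :: x) = M.evalFrom (M.stepSet Q a) x := rfl
    rw [this, ih]
    constructor
    · rintro ⟨t, ht, hw⟩
      rcases M.mem_stepSet.mp ht with ⟨p, hp, hstep⟩
      exact ⟨p, hp, Walk.cons hstep (Or.inr (Set.mem_univ t)) hw⟩
    · rintro ⟨p, hp, hw⟩
      cases hw with
      | cons h1 h2 h3 =>
        exact ⟨_, M.mem_stepSet.mpr ⟨p, hp, h1⟩, h3⟩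

lemma isReg_listSup {ι : Type*} (l : List ι) (f : ι → Language α) (P : ι → Prop)
    (hf : ∀ i, IsReg (f i)) : IsReg {x | ∃ i ∈ l, P i ∧ x ∈ f i} := by
  induction l with
  | nil =>
    refine ⟨0, ?_⟩
    ext x
    rw [RegularExpression.matches'_zero]
    exact iff_of_false (Language.notMem_zero x) fun ⟨i, hi, _⟩ => List.not_mem_nil hi
  | cons b l ih =>
    obtain ⟨e, he⟩ := ih
    obtain ⟨eb, heb⟩ := hf b
    classical
    refine ⟨(if P b then eb else 0) + e, ?_⟩
    ext x
    by_cases hb : P b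
    · rw [if_pos hb]
      simp only [RegularExpression.matches'_add, Language.mem_add, he, heb,
        Set.mem_setOf_eq, List.mem_cons]
      constructor
      · rintro (h | ⟨i, hi, hPi, hx⟩)
        · exact ⟨b, Or.inl rfl, hb, h⟩
        · exact ⟨i, Or.inr hi, hPi, hx⟩
      · rintro ⟨i, (rfl | hi), hPi, hx⟩
        · exact Or.inl hx
        · exact Or.inr ⟨i, hi, hPi, hx⟩
    · rw [if_neg hb]
      simp only [RegularExpression.matches'_add, Language.mem_add, he,
        RegularExpression.matches'_zero, Set.mem_setOf_eq, List.mem_cons]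
      constructor
      · rintro (h | ⟨i, hi, hPi, hx⟩)
        · exact absurd h (Language.notMem_zero x)
        · exact ⟨i, Or.inr hi, hPi, hx⟩
      · rintro ⟨i, (rfl | hi), hPi, hx⟩
        · exact absurd hPi hb
        · exact Or.inr ⟨i, hi, hPi, hx⟩

end NfaToRegexpAux

open NfaToRegexpAux in
/-- Kleene's theorem, automaton-to-expression direction. -/
theorem nfa_to_regexp {α : Type*} {σ : Type*} [Fintype α] [Fintype σ]
    (M : NFA α σ) :
    ∃ e : RegularExpression α, e.matches' = M.accepts := by
  have huniv : {s : σ | s ∈ (Finset.univ : Finset σ).toList} = (Set.univ : Set σ) := by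
    ext s; simp
  have hlang : ∀ p r : σ, IsReg (Lang M Set.univ p r) := by
    intro p r
    have := isReg_lang M (Finset.univ : Finset σ).toList p r
    rwa [huniv] at this
  have key : M.accepts
      = {x | ∃ i ∈ (Finset.univ : Finset (σ × σ)).toList,
          (i.1 ∈ M.start ∧ i.2 ∈ M.accept) ∧ x ∈ Lang M Set.univ i.1 i.2} := by
    ext x
    rw [NFA.mem_accepts]
    constructor
    · rintro ⟨r, hr, hrx⟩
      rcases (mem_evalFrom_iff_walk M x M.start r).mp hrx with ⟨p, hp, hw⟩
      exact ⟨(p, r), by simp, ⟨hp, hr⟩, hw⟩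
    · rintro ⟨⟨p, r⟩, -, ⟨hp, hr⟩, hw⟩
      exact ⟨r, hr, (mem_evalFrom_iff_walk M x M.start r).mpr ⟨p, hp, hw⟩⟩
  rw [key]
  exact isReg_listSup _ _ _ fun i => hlang i.1 i.2
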